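/- For every t > 0 and x, y ∈ ℝ^d, the Mehler kernel W_t(x,y) = (2π sinh 2t)^{-d/2} · exp(−(|x−y|²/2)·coth 2t − ⟨x,y⟩·tanh t) satisfies 0 < W_t(x,y) ≤ (2πt)^{-d/2} · exp(−|x−y|²/(4t)). -/

import Mathlib

open Real MeasureTheory
open scoped RealInnerProductSpace

lemma sinh_le_mul_cosh {t : ℝ} (ht : 0 ≤ t) : Real.sinh t ≤ t * Real.cosh t := by
  have h : MonotoneOn (fun x => x * Real.cosh x - Real.sinh x) (Set.Ici 0) := by
    apply monotoneOn_of_deriv_nonneg (convex_Ici 0)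
      (by fun_prop)
    · intro x hx
      exact ((differentiableAt_id.mul Real.differentiableAt_cosh).sub
        Real.differentiableAt_sinh).differentiableWithinAt
    · intro x hx
      rw [interior_Ici, Set.mem_Ioi] at hx
      have : HasDerivAt (fun x => x * Real.cosh x - Real.sinh x) (x * Real.sinh x) x := by
        have h1 : HasDerivAt (fun x : ℝ => x * Real.cosh x)
            (1 * Real.cosh x + x * Real.sinh x) x :=
          (hasDerivAt_id x).mul (Real.hasDerivAt_cosh x)
        have := h1.sub (Real.hasDerivAt_sinh x)
        exact this.congr_deriv (by ring)
      rw [this.deriv]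
      exact mul_nonneg hx.le (Real.sinh_nonneg_iff.mpr hx.le)
  have := h (Set.self_mem_Ici) (Set.mem_Ici.mpr ht) ht
  simp at this
  linarith

/-- Bounds on the Mehler kernel of the Hermite heat semigroup. -/
theorem mehler_kernel_bounds (d : ℕ) (t : ℝ) (ht : 0 < t)
    (x y : EuclideanSpace ℝ (Fin d)) :
    0 < (2 * π * Real.sinh (2 * t)) ^ (-(d : ℝ) / 2) *
          Real.exp (-(dist x y ^ 2 / 2) * (Real.cosh (2 * t) / Real.sinh (2 * t))
            - ⟪x, y⟫ * Real.tanh t) ∧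
      (2 * π * Real.sinh (2 * t)) ^ (-(d : ℝ) / 2) *
          Real.exp (-(dist x y ^ 2 / 2) * (Real.cosh (2 * t) / Real.sinh (2 * t))
            - ⟪x, y⟫ * Real.tanh t) ≤
        (2 * π * t) ^ (-(d : ℝ) / 2) * Real.exp (-dist x y ^ 2 / (4 * t)) := by
  have hs2 : 0 < Real.sinh (2 * t) := Real.sinh_pos_iff.mpr (by linarith)
  have hc : 0 < Real.cosh t := Real.cosh_pos t
  have hst : 0 < Real.sinh t := Real.sinh_pos_iff.mpr ht
  have hpi : (0:ℝ) < π := Real.pi_pos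
  constructor
  · positivity
  · -- base inequality for the power factor
    have h1 : (2 * π * Real.sinh (2 * t)) ^ (-(d : ℝ) / 2) ≤ (2 * π * t) ^ (-(d : ℝ) / 2) := by
      apply Real.rpow_le_rpow_of_nonpos (by positivity)
      · have : t < Real.sinh (2 * t) := lt_trans (by linarith)
          (Real.self_lt_sinh_iff.mpr (by linarith))
        nlinarith
      · have : (0:ℝ) ≤ (d:ℝ) := Nat.cast_nonneg d
        linarith
    -- exponent inequality
    have h2 : -(dist x y ^ 2 / 2) * (Real.cosh (2 * t) / Real.sinh (2 * t))
        - ⟪x, y⟫ * Real.tanh t ≤ -dist x y ^ 2 / (4 * t) := by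
      set D := dist x y ^ 2 with hD
      set ip := ⟪x, y⟫ with hip
      set s := Real.sinh t
      set c := Real.cosh t
      have hsq : c ^ 2 - s ^ 2 = 1 := by
        have := Real.cosh_sq_sub_sinh_sq t; nlinarith [this]
      have hs2t : Real.sinh (2 * t) = 2 * s * c := Real.sinh_two_mul t
      have hc2t : Real.cosh (2 * t) = c ^ 2 + s ^ 2 := by
        rw [Real.cosh_two_mul]
      have htanh : Real.tanh t = s / c := Real.tanh_eq_sinh_div_cosh t
      -- decomposition
      have hdec : -(D / 2) * (Real.cosh (2 * t) / Real.sinh (2 * t)) - ip * Real.tanh t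
          = -(D / 4) * (c / s) - ((D + 4 * ip) / 4) * (s / c) := by
        rw [hs2t, hc2t, htanh]
        field_simp
        ring
      rw [hdec]
      -- D + 4 ip = ‖x + y‖² ≥ 0
      have hDip : 0 ≤ D + 4 * ip := by
        have h1 : D = ‖x - y‖ ^ 2 := by rw [hD, dist_eq_norm]
        have h2 : ‖x - y‖ ^ 2 = ‖x‖ ^ 2 - 2 * ip + ‖y‖ ^ 2 := by
          rw [hip, @norm_sub_sq_real]
        have h3 : ‖x + y‖ ^ 2 = ‖x‖ ^ 2 + 2 * ip + ‖y‖ ^ 2 := by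
          rw [hip, @norm_add_sq_real]
        nlinarith [sq_nonneg ‖x + y‖]
      have hterm2 : -((D + 4 * ip) / 4) * (s / c) ≤ 0 := by
        have : 0 ≤ (D + 4 * ip) / 4 * (s / c) := by positivity
        linarith
      have hcoth : 1 / t ≤ c / s := by
        rw [div_le_div_iff₀ ht hst]
        have := sinh_le_mul_cosh ht.le
        linarith
      have hterm1 : -(D / 4) * (c / s) ≤ -D / (4 * t) := by
        have hD0 : 0 ≤ D := sq_nonneg _
        have : D / 4 * (1 / t) ≤ D / 4 * (c / s) :=
          mul_le_mul_of_nonneg_left hcoth (by positivity)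
        have heq : -D / (4 * t) = -(D / 4 * (1 / t)) := by field_simp
        rw [heq]; linarith
      linarith
    calc (2 * π * Real.sinh (2 * t)) ^ (-(d : ℝ) / 2) *
          Real.exp (-(dist x y ^ 2 / 2) * (Real.cosh (2 * t) / Real.sinh (2 * t))
            - ⟪x, y⟫ * Real.tanh t)
        ≤ (2 * π * t) ^ (-(d : ℝ) / 2) * Real.exp (-dist x y ^ 2 / (4 * t)) :=
          mul_le_mul h1 (Real.exp_le_exp.mpr h2) (Real.exp_pos _).le (by positivity)
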